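/- Let D > 0 and let μ_H be the probability measure on [0,D] with density proportional to exp(Ht), H ≥ 0. Then for every v ∈ [0,1]: inf_{H ≥ 0} I♭(exp(Ht),[0,D])(v) = (1/D) inf_{w > 0} (min(v,1−v) + w) log(1 + 1/w). -/

import Mathlib

open scoped Classical
open MeasureTheory

/-- Half-line isoperimetric profile `I♭(f,[a,b])(v)`: the infimum of the (normalized)
boundary densities of half-lines `(−∞,x]` or `[x,∞)` carrying mass `v` of the probability
measure with density proportional to `f` on `[a,b]`. -/
noncomputable def Iflat (f : ℝ → ℝ) (a b v : ℝ) : ℝ :=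
  sInf { y : ℝ | ∃ x ∈ Set.Icc a b,
    ((∫ s in a..x, f s) = v * ∫ s in a..b, f s ∨
     (∫ s in x..b, f s) = v * ∫ s in a..b, f s) ∧
    y = f x / ∫ s in a..b, f s }

/-- A nonnegative function is log-concave if `−log f` is convex
(equivalently, the multiplicative inequality below). -/
def LogConcaveFn (f : ℝ → ℝ) : Prop :=
  (∀ x, 0 ≤ f x) ∧ ∀ x y : ℝ, ∀ t ∈ Set.Icc (0:ℝ) 1,
    f x ^ t * f y ^ (1 - t) ≤ f (t * x + (1 - t) * y)

lemma expInt (H a b : ℝ) : IntervalIntegrable (fun s => Real.exp (H * s)) volume a b :=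
  (Real.continuous_exp.comp (continuous_const.mul continuous_id)).intervalIntegrable a b

lemma expKey (H x : ℝ) : H * ∫ s in (0:ℝ)..x, Real.exp (H * s) = Real.exp (H * x) - 1 := by
  rw [intervalIntegral.mul_integral_comp_mul_left (f := Real.exp)]
  simp [integral_exp]

lemma iflat_exp (D : ℝ) (hD : 0 < D) (H : ℝ) (hH : 0 ≤ H) (v : ℝ)
    (hv : v ∈ Set.Icc (0:ℝ) 1) :
    Iflat (fun t => Real.exp (H * t)) 0 D v
      = H * min v (1 - v) + 1 / ∫ s in (0:ℝ)..D, Real.exp (H * s) := by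
  simp only [Iflat]
  set T : ℝ := ∫ s in (0:ℝ)..D, Real.exp (H * s) with hTdef
  have hT : 0 < T := intervalIntegral.intervalIntegral_pos_of_pos (expInt H 0 D) (fun x => Real.exp_pos _) hD
  have hadj : ∀ x : ℝ, (∫ s in (0:ℝ)..x, Real.exp (H * s))
      + ∫ s in x..D, Real.exp (H * s) = T :=
    fun x => intervalIntegral.integral_add_adjacent_intervals (expInt H 0 x) (expInt H x D)
  have value : ∀ u x : ℝ, (∫ s in (0:ℝ)..x, Real.exp (H * s)) = u * T →
      Real.exp (H * x) / T = H * u + 1 / T := by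
    intro u x hxu
    have h1 : Real.exp (H * x) - 1 = H * (u * T) := by rw [← expKey H x, hxu]
    field_simp
    linarith
  have exists_x : ∀ u : ℝ, u ∈ Set.Icc (0:ℝ) 1 →
      ∃ x ∈ Set.Icc (0:ℝ) D, (∫ s in (0:ℝ)..x, Real.exp (H * s)) = u * T := by
    intro u hu
    rcases eq_or_lt_of_le hH with h0 | h0
    · refine ⟨u * D, ⟨mul_nonneg hu.1 hD.le, ?_⟩, ?_⟩
      · nlinarith [hu.2, hD.le]
      · have hTD : T = D := by rw [hTdef, ← h0]; simp
        rw [← h0]; simp [hTD]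
    · have huT : 0 ≤ H * (u * T) := mul_nonneg h0.le (mul_nonneg hu.1 hT.le)
      have hE1 : (1:ℝ) ≤ 1 + H * (u * T) := by linarith
      have hlogpos : 0 ≤ Real.log (1 + H * (u * T)) := Real.log_nonneg hE1
      have hkeyD : H * T = Real.exp (H * D) - 1 := expKey H D
      have huT2 : H * (u * T) ≤ H * T :=
        mul_le_mul_of_nonneg_left (by nlinarith [hu.2, hT.le]) h0.le
      have hle : 1 + H * (u * T) ≤ Real.exp (H * D) := by linarith
      refine ⟨Real.log (1 + H * (u * T)) / H, ⟨div_nonneg hlogpos h0.le, ?_⟩, ?_⟩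
      · rw [div_le_iff₀ h0]
        calc Real.log (1 + H * (u * T)) ≤ Real.log (Real.exp (H * D)) :=
              Real.log_le_log (by linarith) hle
          _ = D * H := by rw [Real.log_exp]; ring
      · have hx : H * (Real.log (1 + H * (u * T)) / H) = Real.log (1 + H * (u * T)) := by
          field_simp
        have := expKey H (Real.log (1 + H * (u * T)) / H)
        rw [hx, Real.exp_log (by linarith)] at this
        have h2 : H * ∫ s in (0:ℝ)..(Real.log (1 + H * (u * T)) / H), Real.exp (H * s)
            = H * (u * T) := by linarith
        exact mul_left_cancel₀ h0.ne' h2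
  have hset : { y : ℝ | ∃ x ∈ Set.Icc (0:ℝ) D,
      ((∫ s in (0:ℝ)..x, Real.exp (H * s)) = v * T ∨
       (∫ s in x..D, Real.exp (H * s)) = v * T) ∧
      y = Real.exp (H * x) / T } = {H * v + 1 / T, H * (1 - v) + 1 / T} := by
    ext y
    constructor
    · rintro ⟨x, hx, hcase | hcase, rfl⟩
      · left; exact value v x hcase
      · right
        have h2 : (∫ s in (0:ℝ)..x, Real.exp (H * s)) = (1 - v) * T := by
          have := hadj x; linarith [hcase]
        exact value (1 - v) x h2
    · rintro (rfl | rfl)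
      · obtain ⟨x, hx, hxe⟩ := exists_x v hv
        exact ⟨x, hx, Or.inl hxe, (value v x hxe).symm⟩
      · obtain ⟨x, hx, hxe⟩ := exists_x (1 - v) ⟨by linarith [hv.2], by linarith [hv.1]⟩
        refine ⟨x, hx, Or.inr ?_, (value (1 - v) x hxe).symm⟩
        have := hadj x; linarith
  rw [hset, csInf_pair]
  rcases le_total v (1 - v) with h | h
  · have h2 := mul_le_mul_of_nonneg_left h hH
    rw [min_eq_left h, min_eq_left (by linarith)]
  · have h2 := mul_le_mul_of_nonneg_left h hH
    rw [min_eq_right h, min_eq_right (by linarith)]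

theorem stmt8 (D : ℝ) (hD : 0 < D) (v : ℝ) (hv : v ∈ Set.Icc (0:ℝ) 1) :
    (⨅ H : Set.Ici (0:ℝ), Iflat (fun t => Real.exp ((H:ℝ) * t)) 0 D v) =
      (1 / D) * ⨅ w : Set.Ioi (0:ℝ), (min v (1 - v) + (w:ℝ)) * Real.log (1 + 1 / (w:ℝ)) := by
  have hvv : 0 ≤ 1 - v := by linarith [hv.2]
  set m := min v (1 - v) with hmdef
  have hm0 : 0 ≤ m := le_min hv.1 hvv
  have hm1 : m ≤ 1 := (min_le_left _ _).trans hv.2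
  haveI : Nonempty (Set.Ici (0:ℝ)) := ⟨⟨0, by simp⟩⟩
  haveI : Nonempty (Set.Ioi (0:ℝ)) := ⟨⟨1, by norm_num⟩⟩
  -- value of Iflat for H > 0
  have hval : ∀ H : ℝ, 0 < H → Iflat (fun t => Real.exp (H * t)) 0 D v
      = H * (m + 1 / (Real.exp (H * D) - 1)) := by
    intro H hH
    have hE : 1 < Real.exp (H * D) := by
      rw [show (1:ℝ) = Real.exp 0 by simp]
      exact Real.exp_lt_exp.mpr (mul_pos hH hD)
    have hkey := expKey H D
    have hTeq : (∫ s in (0:ℝ)..D, Real.exp (H * s)) = (Real.exp (H * D) - 1) / H := by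
      rw [eq_div_iff hH.ne']; linarith
    rw [iflat_exp D hD H hH.le v hv, hTeq, one_div_div, ← hmdef]
    ring
  have hval0 : Iflat (fun t => Real.exp ((0:ℝ) * t)) 0 D v = 1 / D := by
    rw [iflat_exp D hD 0 le_rfl v hv]
    norm_num
  -- the two inf quantities
  have hgnonneg : ∀ w : Set.Ioi (0:ℝ), 0 ≤ (m + (w:ℝ)) * Real.log (1 + 1 / (w:ℝ)) := by
    rintro ⟨w, hw⟩
    have : (0:ℝ) < w := hw
    have h1 : (0:ℝ) ≤ 1/w := by positivity
    exact mul_nonneg (by linarith) (Real.log_nonneg (by linarith))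
  have hgbdd : BddBelow (Set.range fun w : Set.Ioi (0:ℝ) =>
      (m + (w:ℝ)) * Real.log (1 + 1 / (w:ℝ))) := by
    refine ⟨0, ?_⟩; rintro y ⟨w, rfl⟩; exact hgnonneg w
  have hFnonneg : ∀ H : Set.Ici (0:ℝ), 0 ≤ Iflat (fun t => Real.exp ((H:ℝ) * t)) 0 D v := by
    rintro ⟨H, hH⟩
    rcases eq_or_lt_of_le (show (0:ℝ) ≤ H from hH) with h0 | h0
    · show 0 ≤ Iflat (fun t => Real.exp (H * t)) 0 D v
      rw [← h0, hval0]; positivity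
    · show 0 ≤ Iflat (fun t => Real.exp (H * t)) 0 D v
      rw [hval H h0]
      have hE : 1 < Real.exp (H * D) := by
        rw [show (1:ℝ) = Real.exp 0 by simp]
        exact Real.exp_lt_exp.mpr (mul_pos h0 hD)
      have : (0:ℝ) ≤ 1 / (Real.exp (H * D) - 1) := div_nonneg zero_le_one (by linarith)
      exact mul_nonneg h0.le (by linarith)
  have hFbdd : BddBelow (Set.range fun H : Set.Ici (0:ℝ) =>
      Iflat (fun t => Real.exp ((H:ℝ) * t)) 0 D v) := by
    refine ⟨0, ?_⟩; rintro y ⟨H, rfl⟩; exact hFnonneg H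
  -- correspondence H ↔ w
  apply le_antisymm
  · -- LHS ≤ RHS
    rw [show (1/D) * (⨅ w : Set.Ioi (0:ℝ), (m + (w:ℝ)) * Real.log (1 + 1 / (w:ℝ)))
        = (⨅ w : Set.Ioi (0:ℝ), (m + (w:ℝ)) * Real.log (1 + 1 / (w:ℝ))) / D by ring]
    rw [le_div_iff₀ hD]
    apply le_ciInf
    rintro ⟨w, hw⟩
    have hw' : (0:ℝ) < w := hw
    have h1w : (1:ℝ) < 1 + 1/w := by
      have : (0:ℝ) < 1/w := by positivity
      linarith
    set H : ℝ := Real.log (1 + 1/w) / D with hHdef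
    have hHpos : 0 < H := div_pos (Real.log_pos h1w) hD
    have hHD : Real.exp (H * D) = 1 + 1/w := by
      rw [hHdef, div_mul_cancel₀ _ hD.ne', Real.exp_log (by linarith)]
    have hFH : Iflat (fun t => Real.exp (H * t)) 0 D v
        = (1/D) * ((m + w) * Real.log (1 + 1/w)) := by
      rw [hval H hHpos, hHD]
      have : (1:ℝ) + 1/w - 1 = 1/w := by ring
      rw [this, one_div_one_div, hHdef]
      ring
    have hle : (⨅ H : Set.Ici (0:ℝ), Iflat (fun t => Real.exp ((H:ℝ) * t)) 0 D v)
        ≤ (1/D) * ((m + w) * Real.log (1 + 1/w)) := by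
      have := ciInf_le hFbdd (⟨H, hHpos.le⟩ : Set.Ici (0:ℝ))
      simpa [hFH] using this
    calc (⨅ H : Set.Ici (0:ℝ), Iflat (fun t => Real.exp ((H:ℝ) * t)) 0 D v) * D
        ≤ ((1/D) * ((m + w) * Real.log (1 + 1/w))) * D :=
          mul_le_mul_of_nonneg_right hle hD.le
      _ = (m + w) * Real.log (1 + 1/w) := by field_simp
  · -- RHS ≤ LHS
    apply le_ciInf
    rintro ⟨H, hH⟩
    rcases eq_or_lt_of_le (show (0:ℝ) ≤ H from hH) with h0 | h0
    · -- H = 0 case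
      have hF0 : Iflat (fun t => Real.exp ((⟨H, hH⟩ : Set.Ici (0:ℝ)) * t)) 0 D v = 1/D := by
        show Iflat (fun t => Real.exp (H * t)) 0 D v = 1/D
        rw [← h0]; exact hval0
      rw [hF0]
      have hI1 : (⨅ w : Set.Ioi (0:ℝ), (m + (w:ℝ)) * Real.log (1 + 1 / (w:ℝ))) ≤ 1 := by
        apply le_of_forall_pos_le_add
        intro ε hε
        have hεw : (0:ℝ) < 1/ε := by positivity
        have hle2 := ciInf_le hgbdd (⟨1/ε, hεw⟩ : Set.Ioi (0:ℝ))
        refine hle2.trans ?_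
        have h1 : (1:ℝ) / (1/ε) = ε := by field_simp
        have hlog : Real.log (1 + 1/(1/ε)) ≤ 1/(1/ε) :=
          (Real.log_le_sub_one_of_pos (by positivity)).trans (by linarith)
        have hlognn : 0 ≤ Real.log (1 + 1/(1/ε)) := Real.log_nonneg (by nlinarith)
        calc (m + 1/ε) * Real.log (1 + 1/(1/ε))
            ≤ (1 + 1/ε) * (1/(1/ε)) := by nlinarith
          _ = 1 + ε := by field_simp; ring
      calc (1/D) * (⨅ w : Set.Ioi (0:ℝ), (m + (w:ℝ)) * Real.log (1 + 1 / (w:ℝ)))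
          ≤ (1/D) * 1 := mul_le_mul_of_nonneg_left hI1 (by positivity)
        _ = 1/D := mul_one _
    · -- H > 0 case
      have hE : 1 < Real.exp (H * D) := by
        rw [show (1:ℝ) = Real.exp 0 by simp]
        exact Real.exp_lt_exp.mpr (mul_pos h0 hD)
      set w : ℝ := 1 / (Real.exp (H * D) - 1) with hwdef
      have hwpos : 0 < w := by rw [hwdef]; exact one_div_pos.mpr (by linarith)
      have h1w : 1 + 1/w = Real.exp (H * D) := by
        rw [hwdef, one_div_one_div]; ring
      have hFH : Iflat (fun t => Real.exp ((⟨H, hH⟩ : Set.Ici (0:ℝ)) * t)) 0 D v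
          = (1/D) * ((m + w) * Real.log (1 + 1/w)) := by
        show Iflat (fun t => Real.exp (H * t)) 0 D v = _
        rw [hval H h0, h1w, Real.log_exp]
        field_simp
        ring
      rw [hFH]
      have hle2 := ciInf_le hgbdd (⟨w, hwpos⟩ : Set.Ioi (0:ℝ))
      exact mul_le_mul_of_nonneg_left hle2 (by positivity)
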